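/- Let C be the double cyclic code of length (1,7) over Z4 generated by the single element (1 | 3x^3+2x^2+3x+1) in Z4[x]/(x−1) × Z4[x]/(x^7−1). Then C has exactly 4^4 = 256 codewords, its minimum Lee weight is 6, and its Gray image is a (possibly nonlinear) binary (16, 2^8, 6) code. -/

import Mathlib

open Polynomial

abbrev Z4 := ZMod 4

abbrev Rq (n : ℕ) := Polynomial Z4 ⧸ Ideal.span ({(X : Polynomial Z4) ^ n - 1} : Set (Polynomial Z4))

noncomputable def mkQ (n : ℕ) (p : Polynomial Z4) : Rq n := Ideal.Quotient.mk _ p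

noncomputable def toPoly {n : ℕ} (c : Fin n → Z4) : Polynomial Z4 :=
  ∑ i, Polynomial.C (c i) * X ^ (i : ℕ)

noncomputable def tau {r s : ℕ} (c : (Fin r → Z4) × (Fin s → Z4)) : Rq r × Rq s :=
  (mkQ r (toPoly c.1), mkQ s (toPoly c.2))

def shiftT {r s : ℕ} (c : (Fin r → Z4) × (Fin s → Z4)) : (Fin r → Z4) × (Fin s → Z4) :=
  (fun i => c.1 ((finRotate r).symm i), fun j => c.2 ((finRotate s).symm j))

def innerProd {r s : ℕ} (c c' : (Fin r → Z4) × (Fin s → Z4)) : Z4 :=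
  ∑ i, c.1 i * c'.1 i + ∑ j, c.2 j * c'.2 j

/-- Lee weight of an element of `Z4`: `0,1,2,3 ↦ 0,1,2,1`. -/
def leeWt (a : Z4) : ℕ := min a.val (4 - a.val)

/-- Lee weight of a word of `Z4^r × Z4^s`. -/
def leeWeight {r s : ℕ} (c : (Fin r → Z4) × (Fin s → Z4)) : ℕ :=
  ∑ i, leeWt (c.1 i) + ∑ j, leeWt (c.2 j)

/-- The Gray map `0 ↦ (0,0)`, `1 ↦ (0,1)`, `2 ↦ (1,1)`, `3 ↦ (1,0)`. -/
def gray (a : Z4) : ZMod 2 × ZMod 2 :=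
  if a = 0 then (0, 0) else if a = 1 then (0, 1) else if a = 2 then (1, 1) else (1, 0)

/-- The Gray map applied coordinatewise to a word. -/
def grayWord {r s : ℕ} (c : (Fin r → Z4) × (Fin s → Z4)) :
    (Fin r → ZMod 2 × ZMod 2) × (Fin s → ZMod 2 × ZMod 2) :=
  (fun i => gray (c.1 i), fun j => gray (c.2 j))

/-- Hamming distance between two pairs of bits. -/
def bitPairDist (p q : ZMod 2 × ZMod 2) : ℕ :=
  (if p.1 = q.1 then 0 else 1) + (if p.2 = q.2 then 0 else 1)

/-- Hamming distance between binary images (words of `2r + 2s` bits). -/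
def hamDist {r s : ℕ} (u w : (Fin r → ZMod 2 × ZMod 2) × (Fin s → ZMod 2 × ZMod 2)) : ℕ :=
  ∑ i, bitPairDist (u.1 i) (w.1 i) + ∑ j, bitPairDist (u.2 j) (w.2 j)


set_option maxRecDepth 40000

instance : Nontrivial Z4 := ⟨0, 1, by decide⟩

abbrev Word18 := (Fin 1 → Z4) × (Fin 7 → Z4)

lemma mkQ_eq18 {n : ℕ} {p q : Polynomial Z4} (h : (X : Polynomial Z4) ^ n - 1 ∣ p - q) :
    mkQ n p = mkQ n q := by
  rw [mkQ, mkQ, Ideal.Quotient.eq, Ideal.mem_span_singleton]; exact h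

lemma toPoly_degree_lt18 {n : ℕ} (c : Fin n → Z4) : (toPoly c).degree < n := by
  refine lt_of_le_of_lt (degree_sum_le _ _) ?_
  rw [Finset.sup_lt_iff (by exact_mod_cast WithBot.bot_lt_coe n)]
  intro i _
  exact lt_of_le_of_lt (degree_C_mul_X_pow_le _ _) (by exact_mod_cast i.isLt)

lemma coeff_toPoly18 {n : ℕ} (c : Fin n → Z4) (i : Fin n) : (toPoly c).coeff i = c i := by
  simp [toPoly, finset_sum_coeff, coeff_C_mul, coeff_X_pow, Fin.val_eq_val]

lemma mk_toPoly_inj18 {n : ℕ} (hn : 0 < n) {c c' : Fin n → Z4}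
    (h : mkQ n (toPoly c) = mkQ n (toPoly c')) : c = c' := by
  rw [mkQ, mkQ, Ideal.Quotient.eq, Ideal.mem_span_singleton] at h
  have hm : ((X : Polynomial Z4) ^ n - 1).Monic := by
    simpa using monic_X_pow_sub_C (1 : Z4) hn.ne'
  have hdeg : (toPoly c - toPoly c').degree < ((X : Polynomial Z4) ^ n - 1).degree := by
    rw [show ((X : Polynomial Z4) ^ n - 1) = X ^ n - C 1 by simp, degree_X_pow_sub_C hn]
    exact lt_of_le_of_lt (degree_sub_le _ _)
      (max_lt (toPoly_degree_lt18 c) (toPoly_degree_lt18 c'))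
  have h0 : toPoly c - toPoly c' = 0 := by
    rw [← (modByMonic_eq_self_iff hm).2 hdeg, modByMonic_eq_zero_iff_dvd hm]; exact h
  have he : toPoly c = toPoly c' := sub_eq_zero.1 h0
  funext i
  rw [← coeff_toPoly18 c i, ← coeff_toPoly18 c' i, he]

lemma tau_inj18 : Function.Injective (tau (r := 1) (s := 7)) := by
  intro u v h
  exact Prod.ext (mk_toPoly_inj18 one_pos (congrArg Prod.fst h))
    (mk_toPoly_inj18 (by norm_num) (congrArg Prod.snd h))

lemma toPoly_add18 {n : ℕ} (a b : Fin n → Z4) : toPoly (a + b) = toPoly a + toPoly b := by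
  simp [toPoly, add_mul, Finset.sum_add_distrib]

lemma toPoly_smul18 {n : ℕ} (z : Z4) (a : Fin n → Z4) : toPoly (z • a) = C z * toPoly a := by
  simp [toPoly, Finset.mul_sum, mul_assoc]

lemma tau_add18 (u v : Word18) : tau (u + v) = tau u + tau v := by
  simp only [tau, Prod.fst_add, Prod.snd_add, toPoly_add18, Prod.mk_add_mk, mkQ, map_add]

lemma tau_smul18 (z : Z4) (u : Word18) : tau (z • u) = (C z : Polynomial Z4) • tau u := by
  simp only [tau, Prod.smul_fst, Prod.smul_snd, toPoly_smul18, Prod.smul_mk, mkQ]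
  rfl

lemma tau_shift18 (u : Word18) : tau (shiftT u) = (X : Polynomial Z4) • tau u := by
  have h1 : mkQ 1 (toPoly ((shiftT u).1)) = mkQ 1 (X * toPoly u.1) := by
    have he : (shiftT u).1 = u.1 := by
      funext i
      simp [shiftT, Subsingleton.elim ((finRotate 1).symm i) i]
    rw [he]
    apply mkQ_eq18
    refine ⟨-C (u.1 0), ?_⟩
    simp only [toPoly, Fin.sum_univ_one, Fin.val_zero, pow_zero, mul_one, pow_one]
    ring
  have h2 : mkQ 7 (toPoly ((shiftT u).2)) = mkQ 7 (X * toPoly u.2) := by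
    apply mkQ_eq18
    refine ⟨-C (u.2 6), ?_⟩
    have e0 : (finRotate 7).symm 0 = 6 := by decide
    have e1 : (finRotate 7).symm 1 = 0 := by decide
    have e2 : (finRotate 7).symm 2 = 1 := by decide
    have e3 : (finRotate 7).symm 3 = 2 := by decide
    have e4 : (finRotate 7).symm 4 = 3 := by decide
    have e5 : (finRotate 7).symm 5 = 4 := by decide
    have e6 : (finRotate 7).symm 6 = 5 := by decide
    have v0 : ((0 : Fin 7) : ℕ) = 0 := rfl
    have v1 : ((1 : Fin 7) : ℕ) = 1 := rfl
    have v2 : ((2 : Fin 7) : ℕ) = 2 := rfl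
    have v3 : ((3 : Fin 7) : ℕ) = 3 := rfl
    have v4 : ((4 : Fin 7) : ℕ) = 4 := rfl
    have v5 : ((5 : Fin 7) : ℕ) = 5 := rfl
    have v6 : ((6 : Fin 7) : ℕ) = 6 := rfl
    simp only [shiftT, toPoly, Fin.sum_univ_seven, e0, e1, e2, e3, e4, e5, e6,
      v0, v1, v2, v3, v4, v5, v6]
    ring
  exact Prod.ext h1 h2

def s18w0 : Word18 := (![1], ![1,3,2,3,0,0,0])
def s18w1 : Word18 := (![1], ![0,1,3,2,3,0,0])
def s18w2 : Word18 := (![1], ![0,0,1,3,2,3,0])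
def s18w3 : Word18 := (![1], ![0,0,0,1,3,2,3])

noncomputable def g18 : Rq 1 × Rq 7 := (mkQ 1 1, mkQ 7 (3 * X ^ 3 + 2 * X ^ 2 + 3 * X + 1))

def s18c4 (b : Fin 4 → Z4) : Word18 := b 0 • s18w0 + b 1 • s18w1 + b 2 • s18w2 + b 3 • s18w3

def s18nxt (b : Fin 4 → Z4) : Fin 4 → Z4 :=
  ![3 * b 3, b 0 + 3 * b 3, b 1 + b 3, b 2 + 2 * b 3]

lemma s18nxt_0 (b : Fin 4 → Z4) : s18nxt b 0 = 3 * b 3 := rfl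
lemma s18nxt_1 (b : Fin 4 → Z4) : s18nxt b 1 = b 0 + 3 * b 3 := rfl
lemma s18nxt_2 (b : Fin 4 → Z4) : s18nxt b 2 = b 1 + b 3 := rfl
lemma s18nxt_3 (b : Fin 4 → Z4) : s18nxt b 3 = b 2 + 2 * b 3 := rfl

lemma shiftT_add18 (u v : Word18) : shiftT (u + v) = shiftT u + shiftT v := rfl
lemma shiftT_smul18 (z : Z4) (u : Word18) : shiftT (z • u) = z • shiftT u := rfl
lemma shift_w018 : shiftT s18w0 = s18w1 := by decide
lemma shift_w118 : shiftT s18w1 = s18w2 := by decide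
lemma shift_w218 : shiftT s18w2 = s18w3 := by decide
lemma shift_w318 :
    shiftT s18w3 = (3 : Z4) • s18w0 + (3 : Z4) • s18w1 + s18w2 + (2 : Z4) • s18w3 := by decide

lemma shift_c418 (b : Fin 4 → Z4) : shiftT (s18c4 b) = s18c4 (s18nxt b) := by
  simp only [s18c4, shiftT_add18, shiftT_smul18, shift_w018, shift_w118, shift_w218, shift_w318,
    s18nxt_0, s18nxt_1, s18nxt_2, s18nxt_3]
  module

lemma c4_add18 (b b' : Fin 4 → Z4) : s18c4 (b + b') = s18c4 b + s18c4 b' := by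
  simp only [s18c4, Pi.add_apply, add_smul]
  module

lemma c4_smul18 (z : Z4) (b : Fin 4 → Z4) : s18c4 (z • b) = z • s18c4 b := by
  simp only [s18c4, Pi.smul_apply, smul_eq_mul, mul_smul, smul_add]

lemma c4_sub18 (b b' : Fin 4 → Z4) : s18c4 (b - b') = s18c4 b - s18c4 b' := by
  simp only [s18c4, Pi.sub_apply, sub_smul]
  module

lemma tau_w018 : tau s18w0 = g18 := by
  have h1 : toPoly (![1] : Fin 1 → Z4) = 1 := by simp [toPoly]
  have h2 : toPoly (![1,3,2,3,0,0,0] : Fin 7 → Z4) = 3 * X ^ 3 + 2 * X ^ 2 + 3 * X + 1 := by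
    have v2 : ((2 : Fin 7) : ℕ) = 2 := rfl
    have v3 : ((3 : Fin 7) : ℕ) = 3 := rfl
    have a5 : (![1,3,2,3,0,0,0] : Fin 7 → Z4) 5 = 0 := rfl
    have a6 : (![1,3,2,3,0,0,0] : Fin 7 → Z4) 6 = 0 := rfl
    have a2 : (![1,3,2,3,0,0,0] : Fin 7 → Z4) 2 = 2 := rfl
    have a3 : (![1,3,2,3,0,0,0] : Fin 7 → Z4) 3 = 3 := rfl
    have a4 : (![1,3,2,3,0,0,0] : Fin 7 → Z4) 4 = 0 := rfl
    simp only [toPoly, Fin.sum_univ_seven, v2, v3, a5, a6, map_ofNat]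
    norm_num [Matrix.cons_val_zero, Matrix.cons_val_one, Matrix.head_cons, map_ofNat]
    simp only [a2, a3, a4, map_ofNat, map_zero]
    ring
  show (mkQ 1 (toPoly s18w0.1), mkQ 7 (toPoly s18w0.2)) = g18
  rw [show s18w0.1 = (![1] : Fin 1 → Z4) from rfl, show s18w0.2 = ![1,3,2,3,0,0,0] from rfl,
    h1, h2]
  rfl

lemma hXpow18 : ∀ n : ℕ, ∃ b, (X ^ n : Polynomial Z4) • g18 = tau (s18c4 b) := by
  intro n
  induction n with
  | zero =>
    refine ⟨![1,0,0,0], ?_⟩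
    rw [pow_zero, one_smul, show s18c4 ![1,0,0,0] = s18w0 from by decide, tau_w018]
  | succ n ih =>
    obtain ⟨b, hb⟩ := ih
    refine ⟨s18nxt b, ?_⟩
    have hstep : (X ^ (n + 1) : Polynomial Z4) • g18 = (X : Polynomial Z4) • ((X ^ n : Polynomial Z4) • g18) := by
      rw [← mul_smul, ← pow_succ']
    rw [hstep, hb, ← tau_shift18, shift_c418]

lemma key18 : ∀ p : Polynomial Z4, ∃ b, p • g18 = tau (s18c4 b) := by
  intro p
  induction p using Polynomial.induction_on' with
  | add p q hp hq =>
    obtain ⟨b, hb⟩ := hp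
    obtain ⟨b', hb'⟩ := hq
    exact ⟨b + b', by rw [add_smul, hb, hb', c4_add18, tau_add18]⟩
  | monomial n z =>
    obtain ⟨b, hb⟩ := hXpow18 n
    refine ⟨z • b, ?_⟩
    rw [← C_mul_X_pow_eq_monomial, mul_smul, hb, c4_smul18, tau_smul18]

lemma tau_c4_mem18 (b : Fin 4 → Z4) :
    tau (s18c4 b) ∈ Submodule.span (Polynomial Z4) ({g18} : Set (Rq 1 × Rq 7)) := by
  have t1 : tau s18w1 = (X : Polynomial Z4) • g18 := by
    rw [← shift_w018, tau_shift18, tau_w018]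
  have t2 : tau s18w2 = (X : Polynomial Z4) • ((X : Polynomial Z4) • g18) := by
    rw [← shift_w118, tau_shift18, t1]
  have t3 : tau s18w3 =
      (X : Polynomial Z4) • ((X : Polynomial Z4) • ((X : Polynomial Z4) • g18)) := by
    rw [← shift_w218, tau_shift18, t2]
  have ht : tau (s18c4 b) =
      (C (b 0) + C (b 1) * X + C (b 2) * X ^ 2 + C (b 3) * X ^ 3) • g18 := by
    rw [s18c4, tau_add18, tau_add18, tau_add18, tau_smul18, tau_smul18, tau_smul18, tau_smul18,
      tau_w018, t1, t2, t3]
    module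
  rw [ht]
  exact Submodule.smul_mem _ _ (Submodule.mem_span_singleton_self _)

lemma hmem18 (c : Word18) :
    tau c ∈ Submodule.span (Polynomial Z4) ({g18} : Set (Rq 1 × Rq 7)) ↔
      ∃ b, c = s18c4 b := by
  constructor
  · intro h
    obtain ⟨p, hp⟩ := Submodule.mem_span_singleton.1 h
    obtain ⟨b, hb⟩ := key18 p
    exact ⟨b, tau_inj18 (by rw [← hp, hb])⟩
  · rintro ⟨b, rfl⟩
    exact tau_c4_mem18 b

lemma dmin18 : ∀ b : Fin 4 → Z4, b ≠ 0 → 6 ≤ leeWeight (s18c4 b) := by decide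
lemma dzero18 : ∀ b : Fin 4 → Z4, s18c4 b = 0 → b = 0 := by decide
lemma c4_zero18 : s18c4 0 = 0 := by decide
lemma dwt18 : leeWeight (s18c4 ![0,0,1,3]) = 6 ∧ s18c4 ![0,0,1,3] ≠ 0 := by decide
lemma gray_inj18 : Function.Injective gray := by decide
lemma bit_lee18 : ∀ a b : Z4, bitPairDist (gray a) (gray b) = leeWt (a - b) := by decide

lemma c4_inj18 : Function.Injective s18c4 := by
  intro b b' h
  have h0 : s18c4 (b - b') = 0 := by rw [c4_sub18, h, sub_self]
  exact sub_eq_zero.1 (dzero18 _ h0)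

lemma grayWord_inj18 : Function.Injective (grayWord (r := 1) (s := 7)) := by
  intro u v h
  refine Prod.ext (funext fun i => gray_inj18 ?_) (funext fun j => gray_inj18 ?_)
  · exact congrFun (congrArg Prod.fst h) i
  · exact congrFun (congrArg Prod.snd h) j

lemma dist_eq18 (u w : Word18) : hamDist (grayWord u) (grayWord w) = leeWeight (u - w) := by
  simp only [hamDist, grayWord, leeWeight, bit_lee18, Prod.fst_sub, Prod.snd_sub, Pi.sub_apply]


/-- the double cyclic code of length `(1,7)` over `Z4` generated by
`(1 | 3x^3+2x^2+3x+1)` has `4^4 = 256` codewords, minimum Lee weight `6`, and its Gray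
image is a binary `(16, 2^8, 6)` code (a set of `16`-bit words with `2^8` elements and
minimum Hamming distance `6`). -/
theorem stmt_18
    (C : Set ((Fin 1 → Z4) × (Fin 7 → Z4)))
    (hC : ∀ c, c ∈ C ↔ tau c ∈ Submodule.span (Polynomial Z4)
        {((mkQ 1 1, mkQ 7 (3 * X ^ 3 + 2 * X ^ 2 + 3 * X + 1)) : Rq 1 × Rq 7)}) :
    Nat.card C = 256 ∧
    IsLeast {w : ℕ | ∃ c ∈ C, c ≠ 0 ∧ leeWeight c = w} 6 ∧
    Nat.card (grayWord '' C) = 2 ^ 8 ∧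
    IsLeast {n : ℕ | ∃ u ∈ grayWord '' C, ∃ w ∈ grayWord '' C, u ≠ w ∧ hamDist u w = n} 6 := by
  have hmemC : ∀ c, c ∈ C ↔ ∃ b, c = s18c4 b := fun c => (hC c).trans (hmem18 c)
  have hCeq : C = Set.range s18c4 := by
    ext c
    rw [hmemC c]
    exact ⟨fun ⟨b, hb⟩ => ⟨b, hb.symm⟩, fun ⟨b, hb⟩ => ⟨b, hb.symm⟩⟩
  have hcard : Nat.card C = 256 := by
    rw [hCeq, Nat.card_congr (Equiv.ofInjective s18c4 c4_inj18).symm,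
      Nat.card_eq_fintype_card]
    decide
  refine ⟨hcard, ⟨⟨s18c4 ![0,0,1,3], (hmemC _).2 ⟨_, rfl⟩, dwt18.2, dwt18.1⟩, ?_⟩, ?_, ?_, ?_⟩
  · rintro n ⟨c, hc, hne, rfl⟩
    obtain ⟨b, rfl⟩ := (hmemC c).1 hc
    exact dmin18 b (fun h => hne (by rw [h, c4_zero18]))
  · rw [Nat.card_coe_set_eq, Set.ncard_image_of_injective _ grayWord_inj18,
      ← Nat.card_coe_set_eq, hcard]
    norm_num
  · refine ⟨grayWord (s18c4 ![0,0,1,3]), ⟨_, (hmemC _).2 ⟨_, rfl⟩, rfl⟩,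
      grayWord 0, ⟨0, (hmemC _).2 ⟨0, c4_zero18.symm⟩, rfl⟩,
      fun h => dwt18.2 (grayWord_inj18 h), ?_⟩
    rw [dist_eq18, sub_zero, dwt18.1]
  · rintro n ⟨u, ⟨cu, hcu, rfl⟩, w, ⟨cw, hcw, rfl⟩, hne, rfl⟩
    obtain ⟨bu, rfl⟩ := (hmemC cu).1 hcu
    obtain ⟨bw, rfl⟩ := (hmemC cw).1 hcw
    rw [dist_eq18, ← c4_sub18]
    refine dmin18 _ (fun h => hne ?_)
    have : bu = bw := sub_eq_zero.1 h
    rw [this]
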